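/- Let G be a complete undirected graph on vertex set V with edge cost function c satisfying the triangle inequality (c(u,w) ≤ c(u,v) + c(v,w) for all u,v,w). Let T be a minimum spanning tree of G and let H be the Hamiltonian cycle obtained by listing vertices in the order of a preorder walk of T. Then the cost of H is at most twice the cost of an optimal Hamiltonian cycle of G. -/

import Mathlib

/-- A rooted tree with vertex labels in `V`. -/
inductive RTree (V : Type) : Type where
  | node : V → List (RTree V) → RTree V

namespace RTree

variable {V : Type}

/-- The root label of a rooted tree. -/
def root : RTree V → V
  | node v _ => v

/-- The preorder walk of a rooted tree: the list of vertices in the order in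
which they are first visited by a depth-first traversal. -/
def preorder : RTree V → List V
  | node v ts => v :: (ts.attach.map (fun ⟨t, _⟩ => preorder t)).flatten

/-- The total edge cost of a rooted tree with respect to a cost function `c`. -/
def weight (c : V → V → ℝ) : RTree V → ℝ
  | node v ts => (ts.attach.map (fun ⟨t, _⟩ => c v t.root + weight c t)).sum

end RTree

/-- A list of vertices is a Hamiltonian cycle (of the complete graph on `V`) when
it lists every vertex exactly once; closing it up cyclically gives the tour. -/
def IsHamiltonianList {V : Type} [Fintype V] (l : List V) : Prop :=
  l.Nodup ∧ ∀ v : V, v ∈ l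

/-- A rooted tree is a spanning tree of the complete graph on `V` if its preorder
walk lists every vertex exactly once. -/
def IsSpanning {V : Type} [Fintype V] (T : RTree V) : Prop :=
  IsHamiltonianList T.preorder

/-- The cost of the Hamiltonian cycle obtained by closing up the list `l`:
the sum of the costs of cyclically consecutive pairs. -/
def cycleCost {V : Type} (c : V → V → ℝ) (l : List V) : ℝ :=
  ((l.zip (l.rotate 1)).map (fun p => c p.1 p.2)).sum

namespace TSPAux

variable {V : Type}

theorem myInd {motive : RTree V → Prop}
    (h : ∀ v ts, (∀ t ∈ ts, motive t) → motive (RTree.node v ts)) : ∀ t, motive t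
  | RTree.node v ts => h v ts (fun t _ => myInd h t)

theorem preorder_node (v : V) (ts : List (RTree V)) :
    (RTree.node v ts).preorder = v :: (ts.map RTree.preorder).flatten := by
  rw [RTree.preorder]; congr 1
  rw [← List.attach_map_val (l := ts) (f := RTree.preorder)]

theorem weight_node (c : V → V → ℝ) (v : V) (ts : List (RTree V)) :
    (RTree.node v ts).weight c = (ts.map (fun t => c v t.root + t.weight c)).sum := by
  rw [RTree.weight]; congr 1
  rw [← List.attach_map_val (l := ts) (f := fun t => c v t.root + t.weight c)]

theorem preorder_ne_nil (t : RTree V) : t.preorder ≠ [] := by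
  cases t with | node v ts => rw [preorder_node]; simp

theorem preorder_head (t : RTree V) : t.preorder.head (preorder_ne_nil t) = t.root := by
  cases t with | node v ts => simp [preorder_node, RTree.root]

theorem weight_nonneg (c : V → V → ℝ) (hnonneg : ∀ u v, 0 ≤ c u v) (t : RTree V) :
    0 ≤ t.weight c := by
  induction t using myInd with
  | _ v ts ih =>
    rw [weight_node]
    apply List.sum_nonneg
    intro x hx
    simp only [List.mem_map] at hx
    obtain ⟨t, ht, rfl⟩ := hx
    exact add_nonneg (hnonneg _ _) (ih t ht)

/-- The open path cost of a list. -/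
def pathCost (c : V → V → ℝ) (l : List V) : ℝ :=
  ((l.zip l.tail).map (fun p => c p.1 p.2)).sum

theorem pathCost_single (c : V → V → ℝ) (v : V) : pathCost c [v] = 0 := by
  simp [pathCost]

theorem pathCost_cons_cons (c : V → V → ℝ) (u v : V) (l : List V) :
    pathCost c (u :: v :: l) = c u v + pathCost c (v :: l) := by
  simp [pathCost]

theorem pathCost_cons (c : V → V → ℝ) (v : V) (l : List V) (h : l ≠ []) :
    pathCost c (v :: l) = c v (l.head h) + pathCost c l := by
  cases l with
  | nil => exact absurd rfl h
  | cons a t => simp [pathCost_cons_cons]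

theorem pathCost_append (c : V → V → ℝ) (xs ys : List V) (hx : xs ≠ []) (hy : ys ≠ []) :
    pathCost c (xs ++ ys)
      = pathCost c xs + c (xs.getLast hx) (ys.head hy) + pathCost c ys := by
  induction xs with
  | nil => exact absurd rfl hx
  | cons a t ih =>
    cases t with
    | nil =>
      cases ys with
      | nil => exact absurd rfl hy
      | cons b u =>
        simp only [List.singleton_append, pathCost_cons_cons, pathCost_single,
          List.getLast_singleton, List.head_cons]
        ring
    | cons b u =>
      have ht : (b :: u : List V) ≠ [] := by simp
      rw [List.cons_append, List.cons_append, pathCost_cons_cons,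
        ← List.cons_append, ih ht, pathCost_cons_cons,
        List.getLast_cons ht]
      ring

/-- Congruence helper: pathCost plus a closing edge is invariant under list equality. -/
theorem close_congr (c : V → V → ℝ) (w : V) {l l' : List V} (h : l = l')
    (hl : l ≠ []) (hl' : l' ≠ []) :
    pathCost c l + c (l.getLast hl) w = pathCost c l' + c (l'.getLast hl') w := by
  subst h; rfl

theorem zip_close (c : V → V → ℝ) :
    ∀ (t : List V) (h w : V),
      (((h :: t).zip (t ++ [w])).map (fun p => c p.1 p.2)).sum
        = pathCost c (h :: t) + c ((h :: t).getLast (by simp)) w := by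
  intro t
  induction t with
  | nil => intro h w; simp [pathCost_single]
  | cons a t' ih =>
    intro h w
    have h1 : ((h :: a :: t').zip ((a :: t') ++ [w]))
        = (h, a) :: ((a :: t').zip (t' ++ [w])) := by simp
    rw [h1, List.map_cons, List.sum_cons, ih a w, pathCost_cons_cons,
      List.getLast_cons (by simp : (a :: t' : List V) ≠ [])]
    ring

theorem cycleCost_eq (c : V → V → ℝ) (l : List V) (h : l ≠ []) :
    cycleCost c l = pathCost c l + c (l.getLast h) (l.head h) := by
  cases l with
  | nil => exact absurd rfl h
  | cons a t =>
    have hrot : (a :: t).rotate 1 = t ++ [a] := by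
      rw [List.rotate_cons_succ, List.rotate_zero]
    rw [cycleCost, hrot, zip_close c t a a]
    rfl

/-- Key shortcutting lemma. -/
theorem key (c : V → V → ℝ)
    (hnonneg : ∀ u v, 0 ≤ c u v) (hsymm : ∀ u v, c u v = c v u)
    (hdiag : ∀ v, c v v = 0) (htri : ∀ u v w, c u w ≤ c u v + c v w) :
    ∀ t : RTree V,
      pathCost c t.preorder + c (t.preorder.getLast (preorder_ne_nil t)) t.root
        ≤ 2 * t.weight c := by
  have E : ∀ (ts : List (RTree V)) (v : V),
      (∀ t ∈ ts, pathCost c t.preorder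
          + c (t.preorder.getLast (preorder_ne_nil t)) t.root ≤ 2 * t.weight c) →
      pathCost c (v :: (ts.map RTree.preorder).flatten)
        + c ((v :: (ts.map RTree.preorder).flatten).getLast (by simp)) v
        ≤ (ts.map (fun t => 2 * (c v t.root + t.weight c))).sum := by
    intro ts
    induction ts with
    | nil => intro v _; simp [pathCost_single, hdiag]
    | cons t ts' ih =>
      intro v hA
      have hAt := hA t List.mem_cons_self
      have ihv := ih v (fun t' ht' => hA t' (List.mem_cons_of_mem _ ht'))
      set P := t.preorder with hP
      set F := ((ts'.map RTree.preorder)).flatten with hF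
      have hPne : P ≠ [] := preorder_ne_nil t
      have hr : P.head hPne = t.root := preorder_head t
      have hlist : (v :: ((t :: ts').map RTree.preorder).flatten) = (v :: P) ++ F := by
        simp [hP, hF]
      rw [close_congr c v hlist (by simp) (by simp)]
      simp only [List.map_cons, List.sum_cons]
      have hglP : ((v :: P).getLast (by simp)) = P.getLast hPne := List.getLast_cons hPne
      by_cases hFne : F = []
      · have hlist2 : (v :: P) ++ F = v :: P := by rw [hFne, List.append_nil]
        rw [close_congr c v hlist2 (by simp) (by simp),
          pathCost_cons c v P hPne, hr, hglP]
        have h1 : c (P.getLast hPne) v ≤ c (P.getLast hPne) t.root + c t.root v :=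
          htri _ _ _
        have h2 : c t.root v = c v t.root := hsymm _ _
        have h3 : 0 ≤ (ts'.map fun t => 2 * (c v t.root + t.weight c)).sum := by
          apply List.sum_nonneg
          intro x hx
          simp only [List.mem_map] at hx
          obtain ⟨u, hu, rfl⟩ := hx
          have := weight_nonneg c hnonneg u
          have := hnonneg v u.root
          linarith
        linarith
      · have hsplit := pathCost_append c (v :: P) F (by simp) hFne
        have hglW : (((v :: P) ++ F).getLast (by simp)) = F.getLast hFne :=
          List.getLast_append_of_ne_nil _ hFne
        rw [hsplit, hglW, hglP, pathCost_cons c v P hPne, hr]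
        -- triangle: c (P.getLast) (F.head) ≤ c (P.getLast) root + c root v + c v (F.head)
        have h1 : c (P.getLast hPne) (F.head hFne)
            ≤ c (P.getLast hPne) t.root + c t.root (F.head hFne) := htri _ _ _
        have h2 : c t.root (F.head hFne) ≤ c t.root v + c v (F.head hFne) := htri _ _ _
        have h3 : c t.root v = c v t.root := hsymm _ _
        -- rewrite ihv
        rw [pathCost_cons c v F hFne, List.getLast_cons hFne] at ihv
        linarith
  intro t
  induction t using myInd with
  | _ v ts ihs =>
    have hE := E ts v ihs
    have hpre : (RTree.node v ts).preorder = v :: (ts.map RTree.preorder).flatten :=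
      preorder_node v ts
    have hroot : (RTree.node v ts).root = v := rfl
    rw [hroot, close_congr c v hpre (preorder_ne_nil _) (by simp)]
    refine hE.trans (le_of_eq ?_)
    rw [weight_node]
    induction ts with
    | nil => simp
    | cons a l ihl =>
      simp only [List.map_cons, List.sum_cons] at *
      rw [ihl (fun t' ht' => ihs t' (List.mem_cons_of_mem _ ht'))
        (E l v (fun t' ht' => ihs t' (List.mem_cons_of_mem _ ht')))]
      · ring
      · rw [preorder_node]
      · rfl
  
/-- Path tree built from a root and a list. -/
def pathT : V → List V → RTree V
  | v, [] => RTree.node v []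
  | v, w :: r => RTree.node v [pathT w r]

theorem pathT_root (v : V) (l : List V) : (pathT v l).root = v := by
  cases l <;> rfl

theorem pathT_preorder : ∀ (l : List V) (v : V), (pathT v l).preorder = v :: l
  | [], v => by simp [pathT, preorder_node]
  | w :: r, v => by
      simp [pathT, preorder_node, pathT_preorder r w]

theorem pathT_weight (c : V → V → ℝ) :
    ∀ (l : List V) (v : V), (pathT v l).weight c = pathCost c (v :: l)
  | [], v => by simp [pathT, weight_node, pathCost_single]
  | w :: r, v => by
      simp [pathT, weight_node, pathT_weight c r w, pathT_root, pathCost_cons_cons]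

end TSPAux

/-- The 2-approximation guarantee of the MST-preorder heuristic for the metric TSP:
if `c` is a nonnegative symmetric cost function satisfying the triangle inequality,
`T` is a minimum spanning tree, and `H` is the Hamiltonian cycle obtained by listing
the vertices in the order of a preorder walk of `T`, then the cost of `H` is at most
twice the cost of any (in particular, an optimal) Hamiltonian cycle. -/
theorem preorder_mst_tsp_two_approximation {V : Type} [Fintype V] [Nonempty V]
    (c : V → V → ℝ)
    (hnonneg : ∀ u v, 0 ≤ c u v)
    (hsymm : ∀ u v, c u v = c v u)
    (hdiag : ∀ v, c v v = 0)
    (htri : ∀ u v w, c u w ≤ c u v + c v w)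
    (T : RTree V) (hT : IsSpanning T)
    (hmin : ∀ T' : RTree V, IsSpanning T' → RTree.weight c T ≤ RTree.weight c T')
    (Hopt : List V) (hHopt : IsHamiltonianList Hopt) :
    cycleCost c T.preorder ≤ 2 * cycleCost c Hopt := by
  classical
  obtain ⟨v0⟩ := ‹Nonempty V›
  have hne : Hopt ≠ [] := by
    intro h
    have := hHopt.2 v0
    rw [h] at this
    exact absurd this List.not_mem_nil
  obtain ⟨h, rest, rfl⟩ : ∃ a l, Hopt = a :: l := by
    cases Hopt with
    | nil => exact absurd rfl hne
    | cons a l => exact ⟨a, l, rfl⟩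
  -- Step 2: weight T ≤ cycleCost Hopt
  have hspan : IsSpanning (TSPAux.pathT h rest) := by
    unfold IsSpanning
    rw [TSPAux.pathT_preorder]
    exact hHopt
  have hw1 : T.weight c ≤ (TSPAux.pathT h rest).weight c := hmin _ hspan
  have hw2 : (TSPAux.pathT h rest).weight c = TSPAux.pathCost c (h :: rest) :=
    TSPAux.pathT_weight c rest h
  have hcyc : cycleCost c (h :: rest)
      = TSPAux.pathCost c (h :: rest)
        + c ((h :: rest).getLast (by simp)) ((h :: rest).head (by simp)) :=
    TSPAux.cycleCost_eq c (h :: rest) (by simp)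
  have hstep2 : T.weight c ≤ cycleCost c (h :: rest) := by
    have := hnonneg ((h :: rest).getLast (by simp)) ((h :: rest).head (by simp))
    rw [hcyc]
    linarith
  -- Step 1: cycleCost (preorder T) ≤ 2 * weight T
  have hkey := TSPAux.key c hnonneg hsymm hdiag htri T
  have hcycT : cycleCost c T.preorder
      = TSPAux.pathCost c T.preorder
        + c (T.preorder.getLast (TSPAux.preorder_ne_nil T)) T.root := by
    rw [TSPAux.cycleCost_eq c T.preorder (TSPAux.preorder_ne_nil T),
      TSPAux.preorder_head T]
  rw [hcycT]
  linarith
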